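/- arXiv:1711.08409 — 2 statements merged into one kernel-verified Lean document; each statement's English description precedes it below -/
import Mathlib

section
/- Let A be a pseudo-hoop and μ a state operator of type I, II, or III on A. Then: μ(1) = 1; μ is order-preserving; μ∘μ = μ; μ(x→y) ≤ μ(x)→μ(y) and μ(x⇝y) ≤ μ(x)⇝μ(y); Ker(μ) = {x : μ(x) = 1} is a filter of A; Im(μ) = {x : μ(x) = x}; and Ker(μ) ∩ Im(μ) = {1}. -/
universe u v

class PseudoHoop (A : Type u) extends One A, Mul A where
  rimp : A → A → A
  limp : A → A → A
  mul_one' : ∀ x : A, x * 1 = x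
  one_mul' : ∀ x : A, 1 * x = x
  rimp_self : ∀ x : A, rimp x x = 1
  limp_self : ∀ x : A, limp x x = 1
  mul_rimp : ∀ x y z : A, rimp (x * y) z = rimp x (rimp y z)
  mul_limp : ∀ x y z : A, limp (x * y) z = limp y (limp x z)
  div₁ : ∀ x y : A, (rimp x y) * x = (rimp y x) * y
  div₂ : ∀ x y : A, (rimp x y) * x = x * (limp x y)
  div₃ : ∀ x y : A, x * (limp x y) = y * (limp y x)

namespace PseudoHoop

/-- The order on a pseudo-hoop: `x ≤ y` iff `x → y = 1`. -/
def ple {A : Type u} [PseudoHoop A] (x y : A) : Prop := rimp x y = 1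

/-- The meet `x ∧ y = (x → y) ⊙ x`. -/
def meet {A : Type u} [PseudoHoop A] (x y : A) : A := (rimp x y) * x

/-- `x ∨₁ y = (x → y) ⇝ y`. -/
def join₁ {A : Type u} [PseudoHoop A] (x y : A) : A := limp (rimp x y) y

/-- `x ∨₂ y = (x ⇝ y) → y`. -/
def join₂ {A : Type u} [PseudoHoop A] (x y : A) : A := rimp (limp x y) y

/-- Iterated implication: `x →⁰ y = y`, `x →ⁿ⁺¹ y = x → (x →ⁿ y)`. -/
def rimpPow {A : Type u} [PseudoHoop A] (x : A) : ℕ → A → A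
  | 0, y => y
  | n + 1, y => rimp x (rimpPow x n y)

/-- A filter of a pseudo-hoop. -/
structure IsFilter {A : Type u} [PseudoHoop A] (F : Set A) : Prop where
  nonempty : F.Nonempty
  mul_mem : ∀ {x y : A}, x ∈ F → y ∈ F → x * y ∈ F
  upward : ∀ {x y : A}, x ∈ F → ple x y → y ∈ F

/-- A normal filter: `x → y ∈ F` iff `x ⇝ y ∈ F`. -/
def IsNormalFilter {A : Type u} [PseudoHoop A] (F : Set A) : Prop :=
  IsFilter F ∧ ∀ x y : A, rimp x y ∈ F ↔ limp x y ∈ F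

def IsProper {A : Type u} [PseudoHoop A] (F : Set A) : Prop := F ≠ Set.univ

/-- A pseudo-hoop is simple if `{1}` is its unique proper filter. -/
def IsSimple (A : Type u) [PseudoHoop A] : Prop :=
  ∀ F : Set A, IsFilter F → IsProper F → F = {1}

/-- A pseudo-hoop is Wajsberg if `x ∨₁ y = y ∨₁ x` and `x ∨₂ y = y ∨₂ x`. -/
def IsWajsberg (A : Type u) [PseudoHoop A] : Prop :=
  ∀ x y : A, join₁ x y = join₁ y x ∧ join₂ x y = join₂ y x

/-- A fantastic filter. -/
def IsFantasticFilter {A : Type u} [PseudoHoop A] (F : Set A) : Prop :=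
  IsFilter F ∧ ∀ x y : A,
    (rimp y x ∈ F → rimp (join₁ x y) x ∈ F) ∧
    (limp y x ∈ F → limp (join₂ x y) x ∈ F)

def IS₂ {A : Type u} [PseudoHoop A] (μ : A → A) : Prop :=
  ∀ x y : A, μ (x * y) = μ x * μ (limp x (x * y)) ∧
    μ (x * y) = μ (rimp y (x * y)) * μ y

def IS₃ {A : Type u} [PseudoHoop A] (μ : A → A) : Prop :=
  ∀ x y : A, μ (μ x * μ y) = μ x * μ y

def IS₄ {A : Type u} [PseudoHoop A] (μ : A → A) : Prop :=
  ∀ x y : A, μ (rimp (μ x) (μ y)) = rimp (μ x) (μ y) ∧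
    μ (limp (μ x) (μ y)) = limp (μ x) (μ y)

/-- Type I state operator. -/
def IsStateI {A : Type u} [PseudoHoop A] (μ : A → A) : Prop :=
  (∀ x y : A, μ (rimp x y) = rimp (μ (join₁ x y)) (μ y) ∧
      μ (limp x y) = limp (μ (join₂ x y)) (μ y)) ∧ IS₂ μ ∧ IS₃ μ ∧ IS₄ μ

/-- Type II state operator. -/
def IsStateII {A : Type u} [PseudoHoop A] (μ : A → A) : Prop :=
  (∀ x y : A, μ (rimp x y) = rimp (μ (join₁ y x)) (μ y) ∧
      μ (limp x y) = limp (μ (join₂ y x)) (μ y)) ∧ IS₂ μ ∧ IS₃ μ ∧ IS₄ μ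

/-- Type III state operator. -/
def IsStateIII {A : Type u} [PseudoHoop A] (μ : A → A) : Prop :=
  (∀ x y : A, μ (rimp x y) = rimp (μ x) (μ (meet x y)) ∧
      μ (limp x y) = limp (μ x) (μ (meet x y))) ∧ IS₂ μ ∧ IS₃ μ ∧ IS₄ μ

end PseudoHoop

open PseudoHoop

/-- A bounded pseudo-hoop: a pseudo-hoop with a least element `0`. -/
class BoundedPseudoHoop (A : Type u) extends PseudoHoop A, Zero A where
  zero_le : ∀ x : A, rimp 0 x = 1

namespace BoundedPseudoHoop

/-- `x⁻ = x → 0`. -/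
def negr {A : Type u} [BoundedPseudoHoop A] (x : A) : A := rimp x 0

/-- `x∼ = x ⇝ 0`. -/
def negl {A : Type u} [BoundedPseudoHoop A] (x : A) : A := limp x 0

/-- A bounded pseudo-hoop is good if `x⁻∼ = x∼⁻` for all `x`. -/
def IsGood (A : Type u) [BoundedPseudoHoop A] : Prop :=
  ∀ x : A, negl (negr x) = negr (negl x)

/-- A bounded pseudo-hoop is involutive if `x⁻∼ = x∼⁻ = x` for all `x`. -/
def IsInvolutive (A : Type u) [BoundedPseudoHoop A] : Prop :=
  ∀ x : A, negl (negr x) = x ∧ negr (negl x) = x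

/-- The set of dense elements. -/
def Den (A : Type u) [BoundedPseudoHoop A] : Set A :=
  {x : A | negl (negr x) = 1}

/-- An involutive filter: `x⁻∼ → x ∈ F` and `x∼⁻ ⇝ x ∈ F` for all `x`. -/
def IsInvolutiveFilter {A : Type u} [BoundedPseudoHoop A] (F : Set A) : Prop :=
  IsFilter F ∧ ∀ x : A, rimp (negl (negr x)) x ∈ F ∧ limp (negr (negl x)) x ∈ F

end BoundedPseudoHoop

open BoundedPseudoHoop

namespace PseudoHoop

variable {A : Type u} [PseudoHoop A]

lemma rimp_one_rimp (a b : A) : rimp 1 (rimp a b) = rimp a b := by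
  rw [← mul_rimp, one_mul']

lemma limp_one_limp (a b : A) : limp 1 (limp a b) = limp a b := by
  rw [← mul_limp, mul_one']

lemma rimp_rimp_one (a b : A) : rimp (rimp a b) 1 = 1 := by
  have hv : rimp (rimp a b) 1 * rimp a b = rimp a b := by
    rw [div₁, mul_one', rimp_one_rimp]
  have h2 := mul_rimp (rimp (rimp a b) 1) (rimp a b) (1 : A)
  rw [hv, rimp_self] at h2
  exact h2

lemma limp_limp_one (a b : A) : limp (limp a b) 1 = 1 := by
  have hv : limp a b * limp (limp a b) 1 = limp a b := by
    rw [div₃, one_mul', limp_one_limp]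
  have h2 := mul_limp (limp a b) (limp (limp a b) 1) (1 : A)
  rw [hv, limp_self] at h2
  exact h2

lemma one_rimp (x : A) : rimp 1 x = x := by
  have h1 : rimp x 1 * x = rimp 1 x := by rw [div₁, mul_one']
  have h2 : rimp x (rimp 1 x) = 1 := by rw [← mul_rimp, mul_one', rimp_self]
  have h3 : rimp (rimp 1 x) x = 1 := by
    rw [← h1, mul_rimp, rimp_self, rimp_rimp_one]
  have h4 := div₁ x (rimp 1 x)
  rw [h2, h3, one_mul', one_mul'] at h4
  exact h4.symm

lemma one_limp (x : A) : limp 1 x = x := by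
  have h1 : x * limp x 1 = limp 1 x := by rw [div₃, one_mul']
  have h2 : limp x (limp 1 x) = 1 := by rw [← mul_limp, one_mul', limp_self]
  have h3 : limp (limp 1 x) x = 1 := by
    rw [← h1, mul_limp, limp_self, limp_limp_one]
  have h4 := div₃ x (limp 1 x)
  rw [h2, h3, mul_one', mul_one'] at h4
  exact h4.symm

lemma rimp_one (x : A) : rimp x 1 = 1 := by
  have h := rimp_rimp_one 1 x
  rwa [one_rimp] at h

lemma limp_one (x : A) : limp x 1 = 1 := by
  have h := limp_limp_one 1 x
  rwa [one_limp] at h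

lemma limp_eq_one_of_rimp {x y : A} (h : rimp x y = 1) : limp x y = 1 := by
  have h1 := div₁ x y
  have h2 := div₂ y x
  rw [h, one_mul'] at h1
  have hx : y * limp y x = x := (h1.trans h2).symm
  rw [← hx, mul_limp, limp_self, limp_limp_one]

lemma rimp_eq_one_of_limp {x y : A} (h : limp x y = 1) : rimp x y = 1 := by
  have h1 := div₂ x y
  rw [h, mul_one'] at h1
  have hx : rimp y x * y = x := (div₁ x y).symm.trans h1
  rw [← hx, mul_rimp, rimp_self, rimp_rimp_one]

lemma ple_top (x : A) : ple x 1 := rimp_one x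

lemma ple_of_limp {x y : A} (h : limp x y = 1) : ple x y := rimp_eq_one_of_limp h

lemma limp_of_ple {x y : A} (h : ple x y) : limp x y = 1 := limp_eq_one_of_rimp h

lemma eq_rimp_mul_of_ple {x y : A} (h : ple x y) : x = rimp y x * y := by
  have h' : rimp x y = 1 := h
  have h1 := div₁ x y
  rw [h', one_mul'] at h1
  exact h1

lemma ple_trans {x y z : A} (h1 : ple x y) (h2 : ple y z) : ple x z := by
  have h2' : rimp y z = 1 := h2
  have hx := eq_rimp_mul_of_ple h1
  show rimp x z = 1
  rw [hx, mul_rimp, h2', rimp_rimp_one]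

lemma ple_antisymm {x y : A} (h1 : ple x y) (h2 : ple y x) : x = y := by
  have h1' : rimp x y = 1 := h1
  have h2' : rimp y x = 1 := h2
  have h := div₁ x y
  rw [h1', h2', one_mul', one_mul'] at h
  exact h

lemma ple_mul_right (x y : A) : ple (x * y) y := by
  show rimp (x * y) y = 1
  rw [mul_rimp, rimp_self, rimp_one]

lemma ple_mul_left (x y : A) : ple (x * y) x :=
  ple_of_limp (by rw [mul_limp, limp_self, limp_one])

lemma ple_rimp_mul (x y : A) : ple (rimp x y * x) y := by
  show rimp (rimp x y * x) y = 1
  rw [mul_rimp, rimp_self]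

lemma ple_mul_limp (x y : A) : ple (x * limp x y) y :=
  ple_of_limp (by rw [mul_limp, limp_self])

lemma ple_rimp_mulr (x y : A) : ple x (rimp y (x * y)) := by
  show rimp x (rimp y (x * y)) = 1
  rw [← mul_rimp, rimp_self]

lemma ple_limp_mull (x y : A) : ple y (limp x (x * y)) :=
  ple_of_limp (by rw [← mul_limp, limp_self])

lemma mul_ple_mul_left {x y : A} (w : A) (h : ple x y) : ple (w * x) (w * y) := by
  apply ple_of_limp
  rw [mul_limp]
  exact limp_of_ple (ple_trans h (ple_limp_mull w y))

lemma mul_ple_mul_right {x y : A} (w : A) (h : ple x y) : ple (x * w) (y * w) := by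
  show rimp (x * w) (y * w) = 1
  rw [mul_rimp]
  exact ple_trans h (ple_rimp_mulr y w)

lemma rimp_ple_rimp_right {a b : A} (x : A) (h : ple a b) :
    ple (rimp x a) (rimp x b) := by
  show rimp (rimp x a) (rimp x b) = 1
  rw [← mul_rimp]
  exact ple_trans (ple_rimp_mul x a) h

lemma limp_ple_limp_right {a b : A} (x : A) (h : ple a b) :
    ple (limp x a) (limp x b) := by
  apply ple_of_limp
  rw [← mul_limp]
  exact limp_of_ple (ple_trans (ple_mul_limp x a) h)

lemma rimp_ple_rimp_left {x y : A} (z : A) (h : ple x y) :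
    ple (rimp y z) (rimp x z) := by
  show rimp (rimp y z) (rimp x z) = 1
  rw [← mul_rimp]
  exact ple_trans (mul_ple_mul_left (rimp y z) h) (ple_rimp_mul y z)

lemma limp_ple_limp_left {x y : A} (z : A) (h : ple x y) :
    ple (limp y z) (limp x z) := by
  apply ple_of_limp
  rw [← mul_limp]
  exact limp_of_ple (ple_trans (mul_ple_mul_right (limp y z) h) (ple_mul_limp y z))

lemma ple_join₁ (x y : A) : ple x (join₁ x y) :=
  ple_of_limp (by
    show limp x (limp (rimp x y) y) = 1
    rw [← mul_limp]
    exact limp_of_ple (ple_rimp_mul x y))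

lemma ple_join₂ (x y : A) : ple x (join₂ x y) := by
  show rimp x (rimp (limp x y) y) = 1
  rw [← mul_rimp]
  exact ple_mul_limp x y

lemma ple_join₁' (x y : A) : ple x (join₁ y x) :=
  ple_of_limp (by
    show limp x (limp (rimp y x) x) = 1
    rw [← mul_limp]
    exact limp_of_ple (ple_mul_right (rimp y x) x))

lemma ple_join₂' (x y : A) : ple x (join₂ y x) := by
  show rimp x (rimp (limp y x) x) = 1
  rw [← mul_rimp]
  exact ple_mul_left x (limp y x)

lemma meet_ple_right (x y : A) : ple (meet x y) y := ple_rimp_mul x y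

section StateAux

variable (μ : A → A)

lemma state_mono (hIS2 : IS₂ μ) {x y : A} (h : ple x y) : ple (μ x) (μ y) := by
  have hx : rimp y x * y = x := (eq_rimp_mul_of_ple h).symm
  have h2 := (hIS2 (rimp y x) y).2
  rw [hx] at h2
  rw [h2]
  exact ple_mul_right _ _

lemma state_idem (hIS3 : IS₃ μ) (hμ1 : μ 1 = 1) (x : A) : μ (μ x) = μ x := by
  have h := hIS3 x 1
  rwa [hμ1, mul_one'] at h

lemma stmt18_aux (hIS2 : IS₂ μ) (hIS3 : IS₃ μ) (hμ1 : μ 1 = 1)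
    (hd : ∀ x y : A, ple (μ (rimp x y)) (rimp (μ x) (μ y)) ∧
      ple (μ (limp x y)) (limp (μ x) (μ y))) :
    μ 1 = 1 ∧
    (∀ x y : A, ple x y → ple (μ x) (μ y)) ∧
    (∀ x : A, μ (μ x) = μ x) ∧
    (∀ x y : A, ple (μ (rimp x y)) (rimp (μ x) (μ y)) ∧
      ple (μ (limp x y)) (limp (μ x) (μ y))) ∧
    IsFilter {x : A | μ x = 1} ∧
    Set.range μ = {x : A | μ x = x} ∧
    {x : A | μ x = 1} ∩ Set.range μ = {1} := by
  have idem := state_idem μ hIS3 hμ1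
  have mono := fun {x y : A} (h : ple x y) => state_mono μ hIS2 h
  refine ⟨hμ1, fun x y h => mono h, idem, hd, ?_, ?_, ?_⟩
  · refine ⟨⟨1, hμ1⟩, ?_, ?_⟩
    · intro x y hx hy
      have h2 := (hIS2 x y).1
      have hle : ple (μ y) (μ (limp x (x * y))) := mono (ple_limp_mull x y)
      have hy' : μ y = 1 := hy
      rw [hy'] at hle
      have heq : μ (limp x (x * y)) = 1 := ple_antisymm (ple_top _) hle
      have hx' : μ x = 1 := hx
      show μ (x * y) = 1
      rw [h2, hx', heq, one_mul']
    · intro x y hx h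
      have hle := mono h
      have hx' : μ x = 1 := hx
      rw [hx'] at hle
      exact ple_antisymm (ple_top _) hle
  · ext z
    simp only [Set.mem_range, Set.mem_setOf_eq]
    constructor
    · rintro ⟨y, rfl⟩
      exact idem y
    · intro h
      exact ⟨z, h⟩
  · ext z
    simp only [Set.mem_inter_iff, Set.mem_setOf_eq, Set.mem_range,
      Set.mem_singleton_iff]
    constructor
    · rintro ⟨hz, y, hy⟩
      rw [← hy] at hz ⊢
      rwa [idem] at hz
    · rintro rfl
      exact ⟨hμ1, 1, hμ1⟩

end StateAux

end PseudoHoop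
theorem stmt18 {A : Type u} [PseudoHoop A] (μ : A → A)
    (h : IsStateI μ ∨ IsStateII μ ∨ IsStateIII μ) :
    μ 1 = 1 ∧
    (∀ x y : A, ple x y → ple (μ x) (μ y)) ∧
    (∀ x : A, μ (μ x) = μ x) ∧
    (∀ x y : A, ple (μ (rimp x y)) (rimp (μ x) (μ y)) ∧
      ple (μ (limp x y)) (limp (μ x) (μ y))) ∧
    IsFilter {x : A | μ x = 1} ∧
    Set.range μ = {x : A | μ x = x} ∧
    {x : A | μ x = 1} ∩ Set.range μ = {1} := by
  have hj : join₁ (1 : A) 1 = 1 := by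
    show limp (rimp (1 : A) 1) 1 = 1
    rw [rimp_self, limp_self]
  have hm : meet (1 : A) 1 = 1 := by
    show rimp (1 : A) 1 * 1 = 1
    rw [rimp_self, mul_one']
  rcases h with ⟨h1, h2, h3, h4⟩ | ⟨h1, h2, h3, h4⟩ | ⟨h1, h2, h3, h4⟩
  · have hμ1 : μ 1 = 1 := by
      have h := (h1 1 1).1
      rwa [rimp_self, hj, rimp_self] at h
    refine stmt18_aux μ h2 h3 hμ1 (fun x y => ⟨?_, ?_⟩)
    · rw [(h1 x y).1]
      exact rimp_ple_rimp_left (μ y) (state_mono μ h2 (ple_join₁ x y))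
    · rw [(h1 x y).2]
      exact limp_ple_limp_left (μ y) (state_mono μ h2 (ple_join₂ x y))
  · have hμ1 : μ 1 = 1 := by
      have h := (h1 1 1).1
      rwa [rimp_self, hj, rimp_self] at h
    refine stmt18_aux μ h2 h3 hμ1 (fun x y => ⟨?_, ?_⟩)
    · rw [(h1 x y).1]
      exact rimp_ple_rimp_left (μ y) (state_mono μ h2 (ple_join₁' x y))
    · rw [(h1 x y).2]
      exact limp_ple_limp_left (μ y) (state_mono μ h2 (ple_join₂' x y))
  · have hμ1 : μ 1 = 1 := by
      have h := (h1 1 1).1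
      rwa [rimp_self, hm, rimp_self] at h
    refine stmt18_aux μ h2 h3 hμ1 (fun x y => ⟨?_, ?_⟩)
    · rw [(h1 x y).1]
      exact rimp_ple_rimp_right (μ x) (state_mono μ h2 (meet_ple_right x y))
    · rw [(h1 x y).2]
      exact limp_ple_limp_right (μ x) (state_mono μ h2 (meet_ple_right x y))
end

section
/- Every type II state operator on a pseudo-hoop A is a type III state operator. Moreover, if A is bounded, the kernel of any type II state operator is an involutive filter of A. -/
universe u v

open PseudoHoop

open BoundedPseudoHoop

section Aux

variable {A : Type u} [PseudoHoop A]

lemma aux_one_rimp (x : A) : rimp (1 : A) x = x := by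
  have h1 : rimp x (rimp 1 x) = 1 := by
    have h := mul_rimp x 1 x
    rw [mul_one', rimp_self] at h
    exact h.symm
  have hd : rimp x 1 * x = rimp 1 x := by
    have := div₁ x 1; rwa [mul_one'] at this
  have h2 : rimp (rimp x 1) (1 : A) = 1 := by
    have h := mul_rimp (rimp x 1) x (rimp 1 x)
    rw [hd, rimp_self, h1] at h
    exact h.symm
  have h3 : rimp (rimp 1 x) x = 1 := by
    have h := mul_rimp (rimp x 1) x x
    rw [hd, rimp_self, h2] at h
    exact h
  have hdd := div₁ (rimp 1 x) x
  rw [h3, h1, one_mul', one_mul'] at hdd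
  exact hdd

lemma aux_one_limp (x : A) : limp (1 : A) x = x := by
  have h := div₂ 1 x
  rw [aux_one_rimp, mul_one', one_mul'] at h
  exact h.symm

lemma aux_limp_one (x : A) : limp x (1 : A) = 1 := by
  have hx : x * limp x 1 = x := by
    have h := div₃ x 1
    rw [aux_one_limp, one_mul'] at h
    exact h
  have h := mul_limp x (limp x 1) (1 : A)
  rw [hx, limp_self] at h
  exact h

lemma aux_rimp_one (x : A) : rimp x (1 : A) = 1 := by
  have hx : rimp x 1 * x = x := by
    have h := div₂ x 1
    rw [aux_limp_one, mul_one'] at h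
    exact h
  have h := mul_rimp (rimp x 1) x (1 : A)
  rw [hx, rimp_self] at h
  exact h

lemma aux_eq_mul_of_rimp {x y : A} (h : rimp x y = 1) : x = y * limp y x := by
  have d2 := div₂ x y
  rw [h, one_mul'] at d2
  exact d2.trans (div₃ x y)

lemma aux_eq_mul_of_limp {x y : A} (h : limp x y = 1) : x = rimp y x * y := by
  have d2 := div₂ x y
  rw [h, mul_one'] at d2
  exact d2.symm.trans (div₁ x y)

lemma aux_rimp_of_limp {x y : A} (h : limp x y = 1) : rimp x y = 1 := by
  have hx := aux_eq_mul_of_limp h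
  rw [hx, mul_rimp, rimp_self, aux_rimp_one]

lemma aux_limp_of_rimp {x y : A} (h : rimp x y = 1) : limp x y = 1 := by
  have hx := aux_eq_mul_of_rimp h
  rw [hx, mul_limp, limp_self, aux_limp_one]

lemma aux_rimp_trans {x y z : A} (h1 : rimp x y = 1) (h2 : rimp y z = 1) :
    rimp x z = 1 := by
  have hx : x = rimp y x * y := by
    have d := div₁ x y
    rw [h1, one_mul'] at d
    exact d
  rw [hx, mul_rimp, h2, aux_rimp_one]

lemma aux_limp_trans {x y z : A} (h1 : limp x y = 1) (h2 : limp y z = 1) :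
    limp x z = 1 := by
  have hx : x = y * limp y x := by
    have d := div₃ x y
    rw [h1, mul_one'] at d
    exact d
  rw [hx, mul_limp, h2, aux_limp_one]

lemma aux_antisym {x y : A} (h1 : rimp x y = 1) (h2 : rimp y x = 1) : x = y := by
  have d := div₁ x y
  rw [h1, h2, one_mul', one_mul'] at d
  exact d

lemma aux_ded_r (x y : A) : rimp (rimp x y * x) y = 1 := by
  rw [mul_rimp, rimp_self]

lemma aux_ded_l (x y : A) : limp (x * limp x y) y = 1 := by
  rw [mul_limp, limp_self]

lemma aux_le_limp_mul (x y : A) : limp y (limp x (x * y)) = 1 := by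
  rw [← mul_limp, limp_self]

lemma aux_meet_le_r (x y : A) : rimp (meet x y) x = 1 := by
  simp only [meet]
  rw [mul_rimp, rimp_self, aux_rimp_one]

lemma aux_meet_eq (x y : A) : meet x y = x * limp x y := by
  simp only [meet]; exact div₂ x y

lemma aux_meet_le_l (x y : A) : limp (meet x y) x = 1 := by
  rw [aux_meet_eq, mul_limp, limp_self, aux_limp_one]

lemma aux_meet_le₂ (x y : A) : rimp (meet x y) y = 1 := aux_ded_r x y

lemma aux_meet_le₂' (x y : A) : limp (meet x y) y = 1 := by
  rw [aux_meet_eq]; exact aux_ded_l x y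

lemma aux_rimp_meet (x y : A) : rimp x (meet x y) = rimp x y := by
  apply aux_antisym
  · have h : rimp (rimp x (meet x y) * x) y = 1 :=
      aux_rimp_trans (aux_ded_r x (meet x y)) (aux_meet_le₂ x y)
    rwa [mul_rimp] at h
  · have h : rimp (rimp x y * x) (meet x y) = 1 := by
      simp only [meet]; exact rimp_self _
    rwa [mul_rimp] at h

lemma aux_limp_meet (x y : A) : limp x (meet x y) = limp x y := by
  apply aux_antisym
  · apply aux_rimp_of_limp
    have h : limp (x * limp x (meet x y)) y = 1 :=
      aux_limp_trans (aux_ded_l x (meet x y)) (aux_meet_le₂' x y)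
    rwa [mul_limp] at h
  · apply aux_rimp_of_limp
    have h : limp (x * limp x y) (meet x y) = 1 := by
      rw [aux_meet_eq]; exact limp_self _
    rwa [mul_limp] at h

lemma aux_mu_one {μ : A → A} (hμ : IsStateII μ) : μ 1 = 1 := by
  have h := (hμ.1 1 1).1
  simp only [join₁] at h
  rw [rimp_self, aux_one_limp, rimp_self] at h
  exact h

end Aux

section AuxB

variable {B : Type v} [BoundedPseudoHoop B]

lemma aux_zero_limp (x : B) : limp (0 : B) x = 1 :=
  aux_limp_of_rimp (BoundedPseudoHoop.zero_le x)

lemma aux_negr_mul (x : B) : rimp x 0 * x = 0 :=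
  aux_antisym (aux_ded_r x 0) (BoundedPseudoHoop.zero_le _)

lemma aux_mul_negl (x : B) : x * limp x 0 = 0 :=
  aux_antisym (aux_rimp_of_limp (aux_ded_l x 0)) (BoundedPseudoHoop.zero_le _)

lemma aux_le_negneg_r (x : B) : rimp x (negl (negr x)) = 1 := by
  apply aux_rimp_of_limp
  show limp x (limp (rimp x 0) 0) = 1
  rw [← mul_limp, aux_negr_mul, limp_self]

lemma aux_le_negneg_l (x : B) : limp x (negr (negl x)) = 1 := by
  apply aux_limp_of_rimp
  show rimp x (rimp (limp x 0) 0) = 1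
  rw [← mul_rimp, aux_mul_negl, rimp_self]

lemma aux_upward {ν : B → B} (hν : IsStateII ν) {x y : B}
    (hx : ν x = 1) (hxy : rimp x y = 1) : ν y = 1 := by
  have hx2 : x = y * limp y x := aux_eq_mul_of_rimp hxy
  have h := (hν.2.1 y (limp y x)).1
  rw [← hx2, hx] at h
  have h5 : limp (ν y * ν (limp y x)) (ν y) = 1 := by
    rw [mul_limp, limp_self, aux_limp_one]
  rw [← h, aux_one_limp] at h5
  exact h5

end AuxB

theorem stmt19 :
    (∀ (A : Type u) [PseudoHoop A] (μ : A → A), IsStateII μ → IsStateIII μ) ∧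
    (∀ (B : Type v) [BoundedPseudoHoop B] (ν : B → B), IsStateII ν →
      IsInvolutiveFilter {x : B | ν x = 1}) := by
  constructor
  · intro A _ μ hμ
    refine ⟨fun x y => ⟨?_, ?_⟩, hμ.2⟩
    · have h := (hμ.1 x (meet x y)).1
      have hj : join₁ (meet x y) x = x := by
        simp only [join₁]
        rw [aux_meet_le_r, aux_one_limp]
      rw [aux_rimp_meet, hj] at h
      exact h
    · have h := (hμ.1 x (meet x y)).2
      have hj : join₂ (meet x y) x = x := by
        simp only [join₂]
        rw [aux_meet_le_l, aux_one_rimp]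
      rw [aux_limp_meet, hj] at h
      exact h
  · intro B _ ν hν
    have hmem : ∀ z : B, z ∈ {x : B | ν x = 1} ↔ ν z = 1 := fun z => Iff.rfl
    constructor
    · refine ⟨⟨1, (hmem 1).2 (aux_mu_one hν)⟩, ?_, ?_⟩
      · intro x y hx hy
        have e := (hν.2.1 x y).1
        rw [(hmem x).1 hx, one_mul'] at e
        have hy2 : ν (limp x (x * y)) = 1 :=
          aux_upward hν ((hmem y).1 hy) (aux_rimp_of_limp (aux_le_limp_mul x y))
        exact (hmem _).2 (e.trans hy2)
      · intro x y hx hxy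
        exact (hmem _).2 (aux_upward hν ((hmem x).1 hx) hxy)
    · intro x
      constructor
      · have key := (hν.1 0 x).1
        have hj0 : join₁ x (0 : B) = negl (negr x) := rfl
        rw [BoundedPseudoHoop.zero_le, aux_mu_one hν, hj0] at key
        have h := (hν.1 (negl (negr x)) x).1
        have hj : join₁ x (negl (negr x)) = negl (negr x) := by
          simp only [join₁]
          rw [aux_le_negneg_r, aux_one_limp]
        rw [hj] at h
        exact (hmem _).2 (h.trans key.symm)
      · have key := (hν.1 0 x).2
        have hj0 : join₂ x (0 : B) = negr (negl x) := rfl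
        rw [aux_zero_limp, aux_mu_one hν, hj0] at key
        have h := (hν.1 (negr (negl x)) x).2
        have hj : join₂ x (negr (negl x)) = negr (negl x) := by
          simp only [join₂]
          rw [aux_le_negneg_l, aux_one_rimp]
        rw [hj] at h
        exact (hmem _).2 (h.trans key.symm)
end
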